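/- arXiv:1704.04144 — 3 statements merged into one kernel-verified Lean document; each statement's English description precedes it below -/
import Mathlib

section
/- (Uniform boundedness of midpoint solutions, Proposition 5.4.) Let n ≥ 1, d ≥ 0, N ≥ 1, and let A₀, …, A_d ∈ M_n(ℝ) be skew-symmetric matrices. Let z ∈ ℝⁿ and let ξ₀, ξ₁, …, ξ_{N−1} ∈ ℝ^{d+1} be arbitrary increment vectors. Suppose the sequences (Y_k)_{k=0}^{N} and (Z_k)_{k=0}^{N−1} in ℝⁿ satisfy Y₀ = z and, for every k = 0, …, N−1, the midpoint relations Z_k = Y_k + (1/2) ∑_{i=0}^{d} (ξ_k)ᵢ Aᵢ Z_k and Y_{k+1} = Y_k + ∑_{i=0}^{d} (ξ_k)ᵢ Aᵢ Z_k. Then ‖Y_k‖ = ‖z‖ for every k = 0, …, N. -/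
open Matrix
open scoped RealInnerProductSpace

lemma skew_inner_aux (n : ℕ) (M : Matrix (Fin n) (Fin n) ℝ) (hM : Mᵀ = -M)
    (x : EuclideanSpace ℝ (Fin n)) : ⟪x, Matrix.toEuclideanLin M x⟫ = 0 := by
  have h : ⟪x, Matrix.toEuclideanLin M x⟫ =
      dotProduct (star (WithLp.equiv 2 (Fin n → ℝ) x)) (M *ᵥ WithLp.equiv 2 (Fin n → ℝ) x) := by
    rw [EuclideanSpace.inner_eq_star_dotProduct, dotProduct_comm]; rfl
  rw [h]
  set v := WithLp.equiv 2 (Fin n → ℝ) x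
  have hs : star v = v := rfl
  rw [hs]
  have h2 : dotProduct v (M *ᵥ v) = dotProduct (Mᵀ *ᵥ v) v := by
    rw [dotProduct_mulVec, ← mulVec_transpose, dotProduct_comm]
  rw [hM] at h2
  simp [Matrix.neg_mulVec] at h2
  linarith [h2, dotProduct_comm v (M *ᵥ v)]

/-- Uniform boundedness of midpoint solutions (Proposition 5.4). -/
theorem stmt_4 (n d N : ℕ) (hn : 1 ≤ n) (hN : 1 ≤ N)
    (A : Fin (d + 1) → Matrix (Fin n) (Fin n) ℝ)
    (hA : ∀ i, (A i)ᵀ = -(A i))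
    (z : EuclideanSpace ℝ (Fin n))
    (ξ : ℕ → Fin (d + 1) → ℝ)
    (Y Z : ℕ → EuclideanSpace ℝ (Fin n))
    (hY0 : Y 0 = z)
    (hZ : ∀ k < N, Z k = Y k + (1 / 2 : ℝ) • ∑ i, ξ k i • Matrix.toEuclideanLin (A i) (Z k))
    (hY : ∀ k < N, Y (k + 1) = Y k + ∑ i, ξ k i • Matrix.toEuclideanLin (A i) (Z k)) :
    ∀ k ≤ N, ‖Y k‖ = ‖z‖ := by
  intro k
  induction k with
  | zero => intro _; rw [hY0]
  | succ k ih =>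
    intro hk
    have hkN : k < N := hk
    have ihk := ih (le_of_lt hkN)
    set w : EuclideanSpace ℝ (Fin n) := ∑ i, ξ k i • Matrix.toEuclideanLin (A i) (Z k) with hw
    have hinner : ⟪Z k, w⟫ = 0 := by
      rw [hw, inner_sum]
      refine Finset.sum_eq_zero fun i _ => ?_
      rw [real_inner_smul_right, skew_inner_aux n (A i) (hA i) (Z k), mul_zero]
    have hYk : Y k = Z k - (1 / 2 : ℝ) • w := by
      have := hZ k hkN
      rw [← hw] at this
      rw [this]; abel
    have hYk1 : Y (k + 1) = Z k + (1 / 2 : ℝ) • w := by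
      rw [hY k hkN, ← hw, hYk]
      module
    have hinner' : ⟪(1 / 2 : ℝ) • w, Z k⟫ = 0 := by
      rw [real_inner_smul_left, real_inner_comm, hinner, mul_zero]
    have hnorm : ‖Z k - (1 / 2 : ℝ) • w‖ = ‖Z k + (1 / 2 : ℝ) • w‖ :=
      norm_sub_eq_norm_add hinner'
    rw [hYk1, ← hnorm, ← hYk, ihk]
end

section
/- (Symplecticity of Runge–Kutta methods, Theorem 4.1.) Let m ≥ 1, s ≥ 1, d ≥ 0, and let J ∈ M_{2m}(ℝ) be the standard symplectic matrix J = [[0, −I_m],[I_m, 0]]. Let H₀, …, H_d : ℝ^{2m} → ℝ be twice continuously differentiable, and set Vᵢ(y) = J ∇Hᵢ(y). Let a_{αβ}, b_α (α, β = 1, …, s) be real Runge–Kutta coefficients satisfying the symplectic condition b_α a_{αβ} + b_β a_{βα} = b_α b_β for all α, β = 1, …, s. Fix an increment vector ξ = (ξ₀, …, ξ_d) ∈ ℝ^{d+1}. Suppose that on an open set U ⊆ ℝ^{2m} there are differentiable maps Z₁, …, Z_s : U → ℝ^{2m} and Φ : U → ℝ^{2m} satisfying, for every y ∈ U, the stage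 equations Z_α(y) = y + ∑_{β=1}^{s} a_{αβ} ∑_{i=0}^{d} ξᵢ Vᵢ(Z_β(y)) and the update Φ(y) = y + ∑_{α=1}^{s} b_α ∑_{i=0}^{d} ξᵢ Vᵢ(Z_α(y)). Then for every y ∈ U the Jacobian matrix M = DΦ(y) is symplectic: Mᵀ J M = J. -/
open Matrix

section Aux

theorem matAlg {n : Type*} [Fintype n] [DecidableEq n] {s : ℕ}
    (a : Fin s → Fin s → ℝ) (b : Fin s → ℝ)
    (hsymp : ∀ α β, b α * a α β + b β * a β α = b α * b β)
    (J : Matrix n n ℝ) (hJt : Jᵀ = -J) (hJ2 : J * J = -1)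
    (S Mm P : Fin s → Matrix n n ℝ) (hS : ∀ α, (S α)ᵀ = S α)
    (hP : ∀ α, P α = (J * S α) * Mm α)
    (hMm : ∀ α, Mm α = 1 + ∑ β, a α β • P β)
    (M : Matrix n n ℝ) (hM : M = 1 + ∑ α, b α • P α) :
    Mᵀ * J * M = J := by
  have hJJ : ∀ X : Matrix n n ℝ, J * (J * X) = -X := by
    intro X; rw [← mul_assoc, hJ2, neg_one_mul]
  have e1 : ∀ α, (P α)ᵀ * (J * Mm α) = (Mm α)ᵀ * (S α * Mm α) := by
    intro α
    simp [hP, transpose_mul, hS, hJt, mul_assoc, hJJ, Matrix.mul_neg, Matrix.neg_mul, neg_neg]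
  have e2 : ∀ α, (Mm α)ᵀ * (J * P α) = -((Mm α)ᵀ * (S α * Mm α)) := by
    intro α
    simp [hP, mul_assoc, hJJ, Matrix.mul_neg]
  have h0 : ∀ α, (P α)ᵀ * (J * Mm α) + (Mm α)ᵀ * (J * P α) = 0 := by
    intro α; rw [e1, e2, add_neg_cancel]
  have expand1 : ∀ α, (P α)ᵀ * (J * Mm α)
      = (P α)ᵀ * J + ∑ β, a α β • ((P α)ᵀ * (J * P β)) := by
    intro α
    conv_lhs => rw [hMm α]
    simp [Matrix.mul_add, Finset.mul_sum, Matrix.mul_smul, mul_assoc]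
  have expand2 : ∀ β, (Mm β)ᵀ * (J * P β)
      = J * P β + ∑ γ, a β γ • ((P γ)ᵀ * (J * P β)) := by
    intro β
    conv_lhs => rw [hMm β]
    simp [transpose_add, transpose_one, transpose_sum, transpose_smul,
      Matrix.add_mul, Finset.sum_mul, Matrix.smul_mul]
  have key : ∑ α, b α • ((P α)ᵀ * (J * Mm α) + (Mm α)ᵀ * (J * P α)) = (0 : Matrix n n ℝ) := by
    simp [h0]
  have perα : ∀ α, b α • ((P α)ᵀ * (J * Mm α) + (Mm α)ᵀ * (J * P α))
      = b α • ((P α)ᵀ * J) + b α • (J * P α)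
        + ∑ β, (b α * a α β) • ((P α)ᵀ * (J * P β))
        + ∑ γ, (b α * a α γ) • ((P γ)ᵀ * (J * P α)) := by
    intro α
    rw [expand1 α, expand2 α]
    simp [smul_add, Finset.smul_sum, smul_smul]
    abel
  have keyexp : ∑ α, b α • ((P α)ᵀ * (J * Mm α) + (Mm α)ᵀ * (J * P α))
      = (∑ α, b α • ((P α)ᵀ * J)) + (∑ α, b α • (J * P α))
        + ∑ α, ∑ β, (b α * b β) • ((P α)ᵀ * (J * P β)) := by
    have swap : ∑ α, ∑ γ, (b α * a α γ) • ((P γ)ᵀ * (J * P α))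
        = ∑ α, ∑ β, (b β * a β α) • ((P α)ᵀ * (J * P β)) := Finset.sum_comm
    calc ∑ α, b α • ((P α)ᵀ * (J * Mm α) + (Mm α)ᵀ * (J * P α))
        = (∑ α, b α • ((P α)ᵀ * J)) + (∑ α, b α • (J * P α))
          + (∑ α, ∑ β, (b α * a α β) • ((P α)ᵀ * (J * P β)))
          + (∑ α, ∑ γ, (b α * a α γ) • ((P γ)ᵀ * (J * P α))) := by
          simp only [perα, Finset.sum_add_distrib]
      _ = (∑ α, b α • ((P α)ᵀ * J)) + (∑ α, b α • (J * P α))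
          + ∑ α, ∑ β, ((b α * a α β) + (b β * a β α)) • ((P α)ᵀ * (J * P β)) := by
          rw [swap, add_assoc ((∑ α, b α • ((P α)ᵀ * J)) + ∑ α, b α • (J * P α))]
          congr 1
          rw [← Finset.sum_add_distrib]
          refine Finset.sum_congr rfl fun α _ => ?_
          rw [← Finset.sum_add_distrib]
          exact Finset.sum_congr rfl fun β _ => (add_smul _ _ _).symm
      _ = _ := by
          simp only [hsymp]
  set A := ∑ α, b α • P α with hA
  have hAtJ : Aᵀ * J = ∑ α, b α • ((P α)ᵀ * J) := by
    simp [hA, transpose_sum, transpose_smul, Finset.sum_mul, Matrix.smul_mul]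
  have hJA : J * A = ∑ α, b α • (J * P α) := by
    simp [hA, Finset.mul_sum, Matrix.mul_smul]
  have hquad : Aᵀ * (J * A) = ∑ α, ∑ β, (b α * b β) • ((P α)ᵀ * (J * P β)) := by
    rw [hJA]
    simp only [hA, transpose_sum, transpose_smul, Finset.sum_mul, Finset.mul_sum,
      Matrix.smul_mul, Matrix.mul_smul, Finset.smul_sum, smul_smul]
    rw [Finset.sum_comm]
    exact Finset.sum_congr rfl fun α _ => Finset.sum_congr rfl fun β _ => by rw [mul_comm]
  have zero2 : Aᵀ * J + J * A + Aᵀ * (J * A) = 0 := by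
    rw [hquad, hAtJ, hJA, ← keyexp]; exact key
  have hMt : Mᵀ = 1 + Aᵀ := by rw [hM]; simp [transpose_add]
  calc Mᵀ * J * M = (1 + Aᵀ) * J * (1 + A) := by rw [hMt, hM]
    _ = J + (Aᵀ * J + J * A + Aᵀ * (J * A)) := by noncomm_ring
    _ = J := by rw [zero2, add_zero]

variable {ι : Type*} [Fintype ι] [DecidableEq ι]

noncomputable def Mat (T : EuclideanSpace ℝ ι →L[ℝ] EuclideanSpace ℝ ι) : Matrix ι ι ℝ :=
  LinearMap.toMatrix (EuclideanSpace.basisFun ι ℝ).toBasis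
    (EuclideanSpace.basisFun ι ℝ).toBasis (T : EuclideanSpace ℝ ι →ₗ[ℝ] EuclideanSpace ℝ ι)

lemma Mat_comp (T S : EuclideanSpace ℝ ι →L[ℝ] EuclideanSpace ℝ ι) :
    Mat (T ∘L S) = Mat T * Mat S := by
  unfold Mat
  rw [ContinuousLinearMap.toLinearMap_comp,
    LinearMap.toMatrix_comp _ (EuclideanSpace.basisFun ι ℝ).toBasis]

lemma Mat_id : Mat (ContinuousLinearMap.id ℝ (EuclideanSpace ℝ ι)) = 1 := by
  unfold Mat
  rw [ContinuousLinearMap.coe_id, LinearMap.toMatrix_id]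

lemma Mat_add (T S : EuclideanSpace ℝ ι →L[ℝ] EuclideanSpace ℝ ι) :
    Mat (T + S) = Mat T + Mat S := by
  unfold Mat; rw [ContinuousLinearMap.coe_add, map_add]

lemma Mat_smul (c : ℝ) (T : EuclideanSpace ℝ ι →L[ℝ] EuclideanSpace ℝ ι) :
    Mat (c • T) = c • Mat T := by
  unfold Mat; rw [ContinuousLinearMap.coe_smul, _root_.map_smul]

lemma Mat_sum {κ : Type*} (f : Finset κ) (T : κ → (EuclideanSpace ℝ ι →L[ℝ] EuclideanSpace ℝ ι)) :
    Mat (∑ i ∈ f, T i) = ∑ i ∈ f, Mat (T i) := by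
  unfold Mat
  rw [ContinuousLinearMap.coe_sum, map_sum]

lemma Mat_toEuclideanLin (A : Matrix ι ι ℝ) :
    Mat (LinearMap.toContinuousLinearMap (Matrix.toEuclideanLin A)) = A := by
  unfold Mat
  rw [LinearMap.coe_toContinuousLinearMap, Matrix.toEuclideanLin_eq_toLin_orthonormal,
    LinearMap.toMatrix_toLin]

lemma Mat_entry (T : EuclideanSpace ℝ ι →L[ℝ] EuclideanSpace ℝ ι) (i j : ι) :
    Mat T i j = T (EuclideanSpace.single j 1) i := by
  unfold Mat
  rw [LinearMap.toMatrix_apply]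
  simp [OrthonormalBasis.coe_toBasis, OrthonormalBasis.coe_toBasis_repr_apply,
    EuclideanSpace.basisFun_repr, EuclideanSpace.basisFun_apply]

/-- `toDual.symm` over `ℝ`, packaged as a continuous linear map. -/
noncomputable def dualCLM : StrongDual ℝ (EuclideanSpace ℝ ι) →L[ℝ] EuclideanSpace ℝ ι :=
  LinearMap.toContinuousLinearMap
    { toFun := fun ℓ => (InnerProductSpace.toDual ℝ (EuclideanSpace ℝ ι)).symm ℓ
      map_add' := fun x y => by simp
      map_smul' := fun c x => by simp }

omit [DecidableEq ι] in
lemma dualCLM_apply (ℓ : StrongDual ℝ (EuclideanSpace ℝ ι)) :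
    dualCLM ℓ = (InnerProductSpace.toDual ℝ (EuclideanSpace ℝ ι)).symm ℓ := rfl

omit [DecidableEq ι] in
lemma gradient_eq_dualCLM (f : EuclideanSpace ℝ ι → ℝ) :
    gradient f = ⇑(dualCLM (ι := ι)) ∘ fderiv ℝ f := rfl

omit [DecidableEq ι] in
lemma grad_differentiable {f : EuclideanSpace ℝ ι → ℝ} (hf : ContDiff ℝ 2 f) :
    Differentiable ℝ (gradient f) := by
  rw [gradient_eq_dualCLM]
  exact (dualCLM.differentiable).comp
    ((hf.fderiv_right (m := 1) (by norm_num)).differentiable one_ne_zero)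

omit [DecidableEq ι] in
lemma fderiv_gradient {f : EuclideanSpace ℝ ι → ℝ} (hf : ContDiff ℝ 2 f)
    (x : EuclideanSpace ℝ ι) :
    fderiv ℝ (gradient f) x = dualCLM ∘L fderiv ℝ (fderiv ℝ f) x := by
  rw [gradient_eq_dualCLM]
  rw [fderiv_comp x dualCLM.differentiableAt
    (((hf.fderiv_right (m := 1) (by norm_num)).differentiable one_ne_zero) x)]
  rw [ContinuousLinearMap.fderiv]

lemma hess_symm {f : EuclideanSpace ℝ ι → ℝ} (hf : ContDiff ℝ 2 f) (x : EuclideanSpace ℝ ι) :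
    (Mat (fderiv ℝ (gradient f) x))ᵀ = Mat (fderiv ℝ (gradient f) x) := by
  have hD2 : ∀ u v : EuclideanSpace ℝ ι,
      fderiv ℝ (fderiv ℝ f) x u v = fderiv ℝ (fderiv ℝ f) x v u := by
    intro u v
    exact second_derivative_symmetric
      (fun y => ((hf.differentiable (by norm_num)) y).hasFDerivAt)
      ((((hf.fderiv_right (m := 1) (by norm_num)).differentiable one_ne_zero) x).hasFDerivAt) u v
  ext i j
  rw [transpose_apply, Mat_entry, Mat_entry, fderiv_gradient hf]
  simp only [ContinuousLinearMap.coe_comp', Function.comp_apply, dualCLM_apply]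
  have key : ∀ (ℓ : StrongDual ℝ (EuclideanSpace ℝ ι)) (k : ι),
      ((InnerProductSpace.toDual ℝ (EuclideanSpace ℝ ι)).symm ℓ) k
        = ℓ (EuclideanSpace.single k 1) := by
    intro ℓ k
    have := InnerProductSpace.toDual_symm_apply (𝕜 := ℝ)
      (y := ℓ) (x := (EuclideanSpace.single k 1 : EuclideanSpace ℝ ι))
    rw [← this, EuclideanSpace.inner_single_right]
    simp
  rw [key, key, hD2]

end Aux

/-- Symplecticity of Runge--Kutta methods (Theorem 4.1). -/
theorem stmt_5 (m s d : ℕ) (hm : 1 ≤ m) (hs : 1 ≤ s)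
    (J : Matrix (Fin m ⊕ Fin m) (Fin m ⊕ Fin m) ℝ)
    (hJ : J = Matrix.fromBlocks 0 (-1) 1 0)
    (H : Fin (d + 1) → EuclideanSpace ℝ (Fin m ⊕ Fin m) → ℝ)
    (hH : ∀ i, ContDiff ℝ 2 (H i))
    (V : Fin (d + 1) → EuclideanSpace ℝ (Fin m ⊕ Fin m) → EuclideanSpace ℝ (Fin m ⊕ Fin m))
    (hV : ∀ i y, V i y = Matrix.toEuclideanLin J (gradient (H i) y))
    (a : Fin s → Fin s → ℝ) (b : Fin s → ℝ)
    (hsymp : ∀ α β, b α * a α β + b β * a β α = b α * b β)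
    (ξ : Fin (d + 1) → ℝ)
    (U : Set (EuclideanSpace ℝ (Fin m ⊕ Fin m))) (hU : IsOpen U)
    (Z : Fin s → EuclideanSpace ℝ (Fin m ⊕ Fin m) → EuclideanSpace ℝ (Fin m ⊕ Fin m))
    (Φ : EuclideanSpace ℝ (Fin m ⊕ Fin m) → EuclideanSpace ℝ (Fin m ⊕ Fin m))
    (hZdiff : ∀ α, ∀ y ∈ U, DifferentiableAt ℝ (Z α) y)
    (hΦdiff : ∀ y ∈ U, DifferentiableAt ℝ Φ y)
    (hstage : ∀ y ∈ U, ∀ α, Z α y = y + ∑ β, a α β • ∑ i, ξ i • V i (Z β y))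
    (hupdate : ∀ y ∈ U, Φ y = y + ∑ α, b α • ∑ i, ξ i • V i (Z α y)) :
    ∀ y ∈ U,
      (LinearMap.toMatrix (EuclideanSpace.basisFun (Fin m ⊕ Fin m) ℝ).toBasis
          (EuclideanSpace.basisFun (Fin m ⊕ Fin m) ℝ).toBasis
          (fderiv ℝ Φ y).toLinearMap)ᵀ * J *
        LinearMap.toMatrix (EuclideanSpace.basisFun (Fin m ⊕ Fin m) ℝ).toBasis
          (EuclideanSpace.basisFun (Fin m ⊕ Fin m) ℝ).toBasis
          (fderiv ℝ Φ y).toLinearMap = J := by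
  intro y hy
  -- basic properties of J
  have hJt : Jᵀ = -J := by
    rw [hJ]
    simp [Matrix.fromBlocks_transpose, Matrix.fromBlocks_neg]
  have hJ2 : J * J = -1 := by
    rw [hJ]
    have h1 : (-1 : Matrix (Fin m ⊕ Fin m) (Fin m ⊕ Fin m) ℝ)
        = Matrix.fromBlocks (-1) 0 0 (-1) := by
      rw [← Matrix.fromBlocks_one, Matrix.fromBlocks_neg, neg_zero]
    rw [h1]
    simp [Matrix.fromBlocks_multiply]
  -- the vector fields
  set Acl : EuclideanSpace ℝ (Fin m ⊕ Fin m) →L[ℝ] EuclideanSpace ℝ (Fin m ⊕ Fin m) :=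
    LinearMap.toContinuousLinearMap (Matrix.toEuclideanLin J) with hAcl
  have hVfun : ∀ i, V i = ⇑Acl ∘ gradient (H i) := by
    intro i; funext z; rw [hV]; rfl
  have hVdiff : ∀ i, Differentiable ℝ (V i) := by
    intro i; rw [hVfun i]
    exact Acl.differentiable.comp (grad_differentiable (hH i))
  have hfderivV : ∀ i z, fderiv ℝ (V i) z = Acl ∘L fderiv ℝ (gradient (H i)) z := by
    intro i z
    rw [hVfun i, fderiv_comp z Acl.differentiableAt (grad_differentiable (hH i) z),
      ContinuousLinearMap.fderiv]
  set W : EuclideanSpace ℝ (Fin m ⊕ Fin m) → EuclideanSpace ℝ (Fin m ⊕ Fin m) :=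
    fun z => ∑ i, ξ i • V i z with hW
  have hWdiff : Differentiable ℝ W := by
    apply Differentiable.fun_sum
    intro i _
    exact (hVdiff i).const_smul (ξ i)
  -- the symmetrized matrix field
  set Sm : EuclideanSpace ℝ (Fin m ⊕ Fin m) → Matrix (Fin m ⊕ Fin m) (Fin m ⊕ Fin m) ℝ :=
    fun z => ∑ i, ξ i • Mat (fderiv ℝ (gradient (H i)) z) with hSm
  have hSmSymm : ∀ z, (Sm z)ᵀ = Sm z := by
    intro z
    rw [hSm]
    simp only [Matrix.transpose_sum, Matrix.transpose_smul]
    exact Finset.sum_congr rfl fun i _ => by rw [hess_symm (hH i)]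
  have hKmat : ∀ z, Mat (fderiv ℝ W z) = J * Sm z := by
    intro z
    have : fderiv ℝ W z = ∑ i, ξ i • fderiv ℝ (V i) z := by
      rw [hW]
      rw [fderiv_fun_sum (fun i _ => ((hVdiff i) z).fun_const_smul (ξ i))]
      exact Finset.sum_congr rfl fun i _ => fderiv_fun_const_smul ((hVdiff i) z) (ξ i)
    rw [this, Mat_sum]
    rw [hSm, Finset.mul_sum]
    refine Finset.sum_congr rfl fun i _ => ?_
    rw [Mat_smul, hfderivV i z, Mat_comp, hAcl, Mat_toEuclideanLin, Matrix.mul_smul]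
  -- derivatives of the stage maps
  have hstagederiv : ∀ α, fderiv ℝ (Z α) y
      = ContinuousLinearMap.id ℝ _ + ∑ β, a α β •
          ((fderiv ℝ W (Z β y)) ∘L fderiv ℝ (Z β) y) := by
    intro α
    have hev : Z α =ᶠ[nhds y] fun y' => y' + ∑ β, a α β • W (Z β y') := by
      filter_upwards [hU.mem_nhds hy] with y' hy'
      rw [hstage y' hy' α]
    have hgdiff : ∀ β, DifferentiableAt ℝ (fun y' => W (Z β y')) y :=
      fun β => (hWdiff (Z β y)).comp y (hZdiff β y hy)
    have hcomp : ∀ β, fderiv ℝ (fun y' => W (Z β y')) y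
        = (fderiv ℝ W (Z β y)).comp (fderiv ℝ (Z β) y) :=
      fun β => fderiv_comp y (hWdiff (Z β y)) (hZdiff β y hy)
    rw [hev.fderiv_eq]
    rw [fderiv_fun_add differentiableAt_fun_id
      (DifferentiableAt.fun_sum fun β _ => (hgdiff β).fun_const_smul (a α β))]
    rw [fderiv_fun_id]
    congr 1
    rw [fderiv_fun_sum (fun β _ => (hgdiff β).fun_const_smul (a α β))]
    refine Finset.sum_congr rfl fun β _ => ?_
    rw [fderiv_fun_const_smul (hgdiff β) (a α β), hcomp β]
  have hupdatederiv : fderiv ℝ Φ y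
      = ContinuousLinearMap.id ℝ _ + ∑ α, b α •
          ((fderiv ℝ W (Z α y)) ∘L fderiv ℝ (Z α) y) := by
    have hev : Φ =ᶠ[nhds y] fun y' => y' + ∑ α, b α • W (Z α y') := by
      filter_upwards [hU.mem_nhds hy] with y' hy'
      rw [hupdate y' hy']
    have hgdiff : ∀ α, DifferentiableAt ℝ (fun y' => W (Z α y')) y :=
      fun α => (hWdiff (Z α y)).comp y (hZdiff α y hy)
    rw [hev.fderiv_eq]
    rw [fderiv_fun_add differentiableAt_fun_id
      (DifferentiableAt.fun_sum fun α _ => (hgdiff α).fun_const_smul (b α))]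
    rw [fderiv_fun_id]
    congr 1
    rw [fderiv_fun_sum (fun α _ => (hgdiff α).fun_const_smul (b α))]
    refine Finset.sum_congr rfl fun α _ => ?_
    have hcomp : fderiv ℝ (fun y' => W (Z α y')) y
        = (fderiv ℝ W (Z α y)).comp (fderiv ℝ (Z α) y) :=
      fderiv_comp y (hWdiff (Z α y)) (hZdiff α y hy)
    rw [fderiv_fun_const_smul (hgdiff α) (b α), hcomp]
  -- translate to matrices
  have hMm : ∀ α, Mat (fderiv ℝ (Z α) y)
      = 1 + ∑ β, a α β • ((J * Sm (Z β y)) * Mat (fderiv ℝ (Z β) y)) := by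
    intro α
    rw [hstagederiv α, Mat_add, Mat_id, Mat_sum]
    congr 1
    refine Finset.sum_congr rfl fun β _ => ?_
    rw [Mat_smul, Mat_comp, hKmat]
  have hMmat : Mat (fderiv ℝ Φ y)
      = 1 + ∑ α, b α • ((J * Sm (Z α y)) * Mat (fderiv ℝ (Z α) y)) := by
    rw [hupdatederiv, Mat_add, Mat_id, Mat_sum]
    congr 1
    refine Finset.sum_congr rfl fun α _ => ?_
    rw [Mat_smul, Mat_comp, hKmat]
  have goal : (Mat (fderiv ℝ Φ y))ᵀ * J * Mat (fderiv ℝ Φ y) = J :=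
    matAlg a b hsymp J hJt hJ2
      (fun α => Sm (Z α y))
      (fun α => Mat (fderiv ℝ (Z α) y))
      (fun α => (J * Sm (Z α y)) * Mat (fderiv ℝ (Z α) y))
      (fun α => hSmSymm (Z α y))
      (fun α => rfl)
      hMm
      (Mat (fderiv ℝ Φ y))
      hMmat
  exact goal
end

section
/- (Second-order expansion of the midpoint step; estimate of R₂ in the proof of Theorem 5.2.) Let n ≥ 1, d ≥ 0, and let V₀, …, V_d : ℝⁿ → ℝⁿ be twice continuously differentiable with ‖Vᵢ(y)‖ ≤ ν, ‖DVᵢ(y)‖ ≤ ν, ‖D²Vᵢ(y)‖ ≤ ν for all y and i. Fix ξ = (ξ₀, …, ξ_d) ∈ ℝ^{d+1} and set W(y) = ∑_{i=0}^{d} ξᵢ Vᵢ(y). Suppose Y₀, Z ∈ ℝⁿ satisfy the midpoint stage equation Z = Y₀ + (1/2) W(Z), and set Y₁ = Y₀ + W(Z). Then there is a constant C, depending only on ν, d, and n, such that ‖Y₁ − Y₀ − W(Y₀) − (1/2) DW(Y₀)[W(Y₀)]‖ ≤ C (‖ξ‖³ + ‖ξ‖⁴). -/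
open scoped BigOperators

private lemma coord_abs_le_norm {m : ℕ} (ξ : EuclideanSpace ℝ (Fin m)) (i : Fin m) :
    |ξ i| ≤ ‖ξ‖ := by
  rw [EuclideanSpace.norm_eq, ← Real.sqrt_sq_eq_abs]
  apply Real.sqrt_le_sqrt
  have : (ξ i) ^ 2 = ‖ξ i‖ ^ 2 := by rw [Real.norm_eq_abs, sq_abs]
  rw [this]
  exact Finset.single_le_sum (f := fun j => ‖ξ j‖ ^ 2)
    (fun j _ => sq_nonneg _) (Finset.mem_univ i)

private lemma sum_smul_norm_le {m : ℕ} (ξ : EuclideanSpace ℝ (Fin m))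
    {E : Type*} [NormedAddCommGroup E] [NormedSpace ℝ E]
    (T : Fin m → E) {ν : ℝ} (hT : ∀ i, ‖T i‖ ≤ ν) :
    ‖∑ i, ξ i • T i‖ ≤ (m : ℝ) * ν * ‖ξ‖ := by
  calc ‖∑ i, ξ i • T i‖ ≤ ∑ i : Fin m, ‖ξ i • T i‖ := norm_sum_le _ _
    _ ≤ ∑ _i : Fin m, ν * ‖ξ‖ := by
        refine Finset.sum_le_sum fun i _ => ?_
        rw [norm_smul, Real.norm_eq_abs, mul_comm ν]
        exact mul_le_mul (coord_abs_le_norm ξ i) (hT i) (norm_nonneg _) (norm_nonneg _)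
    _ = (m : ℝ) * ν * ‖ξ‖ := by
        rw [Finset.sum_const, Finset.card_univ, Fintype.card_fin, nsmul_eq_mul]
        ring

set_option maxHeartbeats 1000000 in
/-- Second-order expansion of the midpoint step (estimate of `R₂` in the proof
of Theorem 5.2). The constant `C` depends only on `ν`, `d` and `n`. -/
theorem stmt_9 (n d : ℕ) (hn : 1 ≤ n) (ν : ℝ) :
    ∃ C : ℝ, ∀ V : Fin (d + 1) → EuclideanSpace ℝ (Fin n) → EuclideanSpace ℝ (Fin n),
      (∀ i, ContDiff ℝ 2 (V i)) →
      (∀ i y, ‖V i y‖ ≤ ν) →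
      (∀ i y, ‖fderiv ℝ (V i) y‖ ≤ ν) →
      (∀ i y, ‖iteratedFDeriv ℝ 2 (V i) y‖ ≤ ν) →
      ∀ (ξ : EuclideanSpace ℝ (Fin (d + 1))) (Y₀ Z Y₁ : EuclideanSpace ℝ (Fin n)),
        Z = Y₀ + (1 / 2 : ℝ) • ∑ i, ξ i • V i Z →
        Y₁ = Y₀ + ∑ i, ξ i • V i Z →
        ‖Y₁ - Y₀ - (∑ i, ξ i • V i Y₀) -
            (1 / 2 : ℝ) • fderiv ℝ (fun z => ∑ i, ξ i • V i z) Y₀ (∑ i, ξ i • V i Y₀)‖ ≤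
          C * (‖ξ‖ ^ 3 + ‖ξ‖ ^ 4) := by
  set K : ℝ := ((d : ℝ) + 1) * |ν| with hKdef
  refine ⟨K ^ 3, ?_⟩
  intro V hV hV0 hV1 hV2 ξ Y₀ Z Y₁ hZ hY₁
  -- `ν` is nonnegative
  have hν : 0 ≤ ν := le_trans (norm_nonneg _) (hV0 0 0)
  have hνabs : |ν| = ν := abs_of_nonneg hν
  have hK : 0 ≤ K := by positivity
  have hcast : ((d : ℝ) + 1) * |ν| = ((d + 1 : ℕ) : ℝ) * ν := by
    rw [hνabs]; push_cast; ring
  set W : EuclideanSpace ℝ (Fin n) → EuclideanSpace ℝ (Fin n) :=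
    fun z => ∑ i, ξ i • V i z with hWdef
  have hWa : ∀ y, (∑ i, ξ i • V i y) = W y := fun y => by rw [hWdef]
  rw [hWa Z] at hZ hY₁
  rw [hWa Y₀]
  -- differentiability of the components
  have hVd : ∀ i, Differentiable ℝ (V i) := fun i => (hV i).differentiable (by norm_num)
  have hVfc : ∀ i, ContDiff ℝ 1 (fderiv ℝ (V i)) :=
    fun i => (hV i).fderiv_right (by norm_num)
  have hVfd : ∀ i, Differentiable ℝ (fderiv ℝ (V i)) :=
    fun i => (hVfc i).differentiable (by norm_num)
  have hWc : ContDiff ℝ 2 W := by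
    rw [hWdef]; exact ContDiff.sum fun i _ => (hV i).const_smul (ξ i)
  have hWdiff : Differentiable ℝ W := hWc.differentiable (by norm_num)
  -- the derivative of `W`
  have hfd : ∀ y, fderiv ℝ W y = ∑ i, ξ i • fderiv ℝ (V i) y := by
    intro y
    rw [hWdef]
    rw [fderiv_fun_sum (A := fun i z => ξ i • V i z) fun i _ => ((hVd i) y).const_smul (ξ i)]
    exact Finset.sum_congr rfl fun i _ => fderiv_const_smul ((hVd i) y) (ξ i)
  -- basic bounds
  have hWb : ∀ y, ‖W y‖ ≤ K * ‖ξ‖ := by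
    intro y
    rw [← hWa y]
    have := sum_smul_norm_le ξ (fun i => V i y) (fun i => hV0 i y)
    rw [hKdef, hcast]
    exact this
  have hDWb : ∀ y, ‖fderiv ℝ W y‖ ≤ K * ‖ξ‖ := by
    intro y
    rw [hfd y]
    have := sum_smul_norm_le ξ (fun i => fderiv ℝ (V i) y) (fun i => hV1 i y)
    rw [hKdef, hcast]
    exact this
  -- second derivative bound
  have hsecond : ∀ i y, ‖fderiv ℝ (fderiv ℝ (V i)) y‖ ≤ ν := by
    intro i y
    calc ‖fderiv ℝ (fderiv ℝ (V i)) y‖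
        = ‖iteratedFDeriv ℝ 0 (fderiv ℝ (fderiv ℝ (V i))) y‖ :=
          (norm_iteratedFDeriv_zero (𝕜 := ℝ) (f := fderiv ℝ (fderiv ℝ (V i))) (x := y)).symm
      _ = ‖iteratedFDeriv ℝ 1 (fderiv ℝ (V i)) y‖ := norm_iteratedFDeriv_fderiv
      _ = ‖iteratedFDeriv ℝ 2 (V i) y‖ := norm_iteratedFDeriv_fderiv
      _ ≤ ν := hV2 i y
  have hffd : ∀ y, fderiv ℝ (fderiv ℝ W) y = ∑ i, ξ i • fderiv ℝ (fderiv ℝ (V i)) y := by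
    intro y
    have : fderiv ℝ W = fun y => ∑ i, ξ i • fderiv ℝ (V i) y := funext hfd
    rw [this, fderiv_fun_sum (A := fun i z => ξ i • fderiv ℝ (V i) z) fun i _ => ((hVfd i) y).const_smul (ξ i)]
    exact Finset.sum_congr rfl fun i _ => fderiv_const_smul ((hVfd i) y) (ξ i)
  have hD2b : ∀ y, ‖fderiv ℝ (fderiv ℝ W) y‖ ≤ K * ‖ξ‖ := by
    intro y
    rw [hffd y]
    have := sum_smul_norm_le ξ (fun i => fderiv ℝ (fderiv ℝ (V i)) y)
      (fun i => hsecond i y)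
    rw [hKdef, hcast]
    exact this
  have hDWdiff : Differentiable ℝ (fderiv ℝ W) :=
    (hWc.fderiv_right (m := 1) (by norm_num)).differentiable (by norm_num)
  -- Lipschitz bound on `fderiv W`
  have hLip : ∀ y y', ‖fderiv ℝ W y - fderiv ℝ W y'‖ ≤ K * ‖ξ‖ * ‖y - y'‖ := by
    intro y y'
    exact convex_univ.norm_image_sub_le_of_norm_fderiv_le
      (fun x _ => (hDWdiff x)) (fun x _ => hD2b x) trivial trivial
  -- Lipschitz bound on `W`
  have hWLip : ∀ y y', ‖W y - W y'‖ ≤ K * ‖ξ‖ * ‖y - y'‖ := by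
    intro y y'
    exact convex_univ.norm_image_sub_le_of_norm_fderiv_le
      (fun x _ => (hWdiff x)) (fun x _ => hDWb x) trivial trivial
  -- the stage increment
  have hZY : Z - Y₀ = (1 / 2 : ℝ) • W Z := sub_eq_iff_eq_add'.mpr hZ
  have hZn : ‖Z - Y₀‖ ≤ 1 / 2 * (K * ‖ξ‖) := by
    rw [hZY, norm_smul]
    simp only [Real.norm_eq_abs]
    rw [abs_of_nonneg (by norm_num : (0:ℝ) ≤ 1/2)]
    exact mul_le_mul_of_nonneg_left (hWb Z) (by norm_num)
  -- second-order Taylor estimate on the segment from `Y₀` to `Z`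
  have htaylor : ‖W Z - W Y₀ - fderiv ℝ W Y₀ (Z - Y₀)‖ ≤
      K * ‖ξ‖ * ‖Z - Y₀‖ * ‖Z - Y₀‖ := by
    set g : EuclideanSpace ℝ (Fin n) → EuclideanSpace ℝ (Fin n) :=
      fun y => W y - fderiv ℝ W Y₀ y with hgdef
    have hgd : ∀ y, DifferentiableAt ℝ g y :=
      fun y => ((hWdiff y).sub ((fderiv ℝ W Y₀).differentiableAt))
    have hgderiv : ∀ y, fderiv ℝ g y = fderiv ℝ W y - fderiv ℝ W Y₀ := by
      intro y
      rw [hgdef]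
      rw [fderiv_fun_sub (hWdiff y) ((fderiv ℝ W Y₀).differentiableAt),
        ContinuousLinearMap.fderiv]
    have hseg : ∀ y ∈ segment ℝ Y₀ Z, ‖y - Y₀‖ ≤ ‖Z - Y₀‖ := by
      rintro y ⟨a, b, ha, hb, hab, rfl⟩
      have hEq : a • Y₀ + b • Z - Y₀ = b • (Z - Y₀) := by
        have : a = 1 - b := by linarith
        rw [this]; module
      rw [hEq, norm_smul, Real.norm_eq_abs, abs_of_nonneg hb]
      nlinarith [norm_nonneg (Z - Y₀)]
    have hbound : ∀ y ∈ segment ℝ Y₀ Z, ‖fderiv ℝ g y‖ ≤ K * ‖ξ‖ * ‖Z - Y₀‖ := by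
      intro y hy
      rw [hgderiv y]
      calc ‖fderiv ℝ W y - fderiv ℝ W Y₀‖ ≤ K * ‖ξ‖ * ‖y - Y₀‖ := hLip y Y₀
        _ ≤ K * ‖ξ‖ * ‖Z - Y₀‖ :=
            mul_le_mul_of_nonneg_left (hseg y hy) (by positivity)
      
    have := (convex_segment Y₀ Z).norm_image_sub_le_of_norm_fderiv_le
      (fun x _ => hgd x) hbound (left_mem_segment ℝ Y₀ Z) (right_mem_segment ℝ Y₀ Z)
    have hgZ : g Z - g Y₀ = W Z - W Y₀ - fderiv ℝ W Y₀ (Z - Y₀) := by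
      rw [hgdef]
      simp only [map_sub]
      abel
    rw [hgZ] at this
    exact this
  -- assemble the remainder
  have hR : Y₁ - Y₀ - W Y₀ - (1 / 2 : ℝ) • fderiv ℝ W Y₀ (W Y₀) =
      (W Z - W Y₀ - fderiv ℝ W Y₀ (Z - Y₀)) +
      (1 / 2 : ℝ) • (fderiv ℝ W Y₀ (W Z) - fderiv ℝ W Y₀ (W Y₀)) := by
    have h1 : Y₁ - Y₀ = W Z := sub_eq_iff_eq_add'.mpr hY₁
    have h2 : fderiv ℝ W Y₀ (Z - Y₀) = (1 / 2 : ℝ) • fderiv ℝ W Y₀ (W Z) := by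
      rw [hZY, map_smul]
    rw [h1, h2]
    module
  rw [hR]
  have hB : ‖(1 / 2 : ℝ) • (fderiv ℝ W Y₀ (W Z) - fderiv ℝ W Y₀ (W Y₀))‖ ≤
      1 / 2 * (K * ‖ξ‖ * (K * ‖ξ‖ * ‖Z - Y₀‖)) := by
    rw [norm_smul, Real.norm_eq_abs, abs_of_nonneg (by norm_num : (0:ℝ) ≤ 1/2)]
    refine mul_le_mul_of_nonneg_left ?_ (by norm_num)
    rw [← map_sub]
    calc ‖fderiv ℝ W Y₀ (W Z - W Y₀)‖ ≤ ‖fderiv ℝ W Y₀‖ * ‖W Z - W Y₀‖ :=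
          (fderiv ℝ W Y₀).le_opNorm _
      _ ≤ (K * ‖ξ‖) * (K * ‖ξ‖ * ‖Z - Y₀‖) :=
          mul_le_mul (hDWb Y₀) (hWLip Z Y₀) (norm_nonneg _) (by positivity)
  have htotal := norm_add_le (W Z - W Y₀ - fderiv ℝ W Y₀ (Z - Y₀))
    ((1 / 2 : ℝ) • (fderiv ℝ W Y₀ (W Z) - fderiv ℝ W Y₀ (W Y₀)))
  have hξ : 0 ≤ ‖ξ‖ := norm_nonneg ξ
  have hZY0 : 0 ≤ ‖Z - Y₀‖ := norm_nonneg _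
  have ha : 0 ≤ K * ‖ξ‖ := mul_nonneg hK hξ
  have hA2 : ‖W Z - W Y₀ - fderiv ℝ W Y₀ (Z - Y₀)‖ ≤
      K * ‖ξ‖ * (1 / 2 * (K * ‖ξ‖)) * (1 / 2 * (K * ‖ξ‖)) := by
    refine htaylor.trans ?_
    exact mul_le_mul (mul_le_mul_of_nonneg_left hZn ha) hZn hZY0 (by positivity)
  have hB2 : ‖(1 / 2 : ℝ) • (fderiv ℝ W Y₀ (W Z) - fderiv ℝ W Y₀ (W Y₀))‖ ≤
      1 / 2 * (K * ‖ξ‖ * (K * ‖ξ‖ * (1 / 2 * (K * ‖ξ‖)))) := by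
    refine hB.trans ?_
    have : K * ‖ξ‖ * (K * ‖ξ‖ * ‖Z - Y₀‖) ≤ K * ‖ξ‖ * (K * ‖ξ‖ * (1 / 2 * (K * ‖ξ‖))) :=
      mul_le_mul_of_nonneg_left (mul_le_mul_of_nonneg_left hZn ha) ha
    linarith
  have e1 : K * ‖ξ‖ * (1 / 2 * (K * ‖ξ‖)) * (1 / 2 * (K * ‖ξ‖)) +
      1 / 2 * (K * ‖ξ‖ * (K * ‖ξ‖ * (1 / 2 * (K * ‖ξ‖)))) = K ^ 3 * ‖ξ‖ ^ 3 / 2 := by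
    ring
  have h4 : 0 ≤ K ^ 3 * ‖ξ‖ ^ 4 := by positivity
  have h3 : 0 ≤ K ^ 3 * ‖ξ‖ ^ 3 := by positivity
  calc ‖W Z - W Y₀ - fderiv ℝ W Y₀ (Z - Y₀) +
        (1 / 2 : ℝ) • (fderiv ℝ W Y₀ (W Z) - fderiv ℝ W Y₀ (W Y₀))‖
      ≤ K ^ 3 * ‖ξ‖ ^ 3 / 2 := by linarith
    _ ≤ K ^ 3 * (‖ξ‖ ^ 3 + ‖ξ‖ ^ 4) := by rw [mul_add]; linarith
end
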